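/- A uniform-block matrix N(A, B, p) is positive definite if and only if a_kk > 0 for every k and every eigenvalue of Δ = A + B P is positive, where P = diag(p_1,...,p_K). -/

import Mathlib

open Matrix

/-- `A ∘ I(p)`: block-diagonal matrix with `a k • I_{p k}` as `k`-th diagonal block. -/
noncomputable def blockI {K : ℕ} (p : Fin K → ℕ) (a : Fin K → ℝ) :
    Matrix ((k : Fin K) × Fin (p k)) ((k : Fin K) × Fin (p k)) ℝ :=
  Matrix.diagonal fun x => a x.1

/-- `B ∘ J(p)`: block matrix whose `(k,k')` block is `B k k' • 1_{p k × p k'}`. -/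
noncomputable def blockJ {K : ℕ} (p : Fin K → ℕ) (B : Matrix (Fin K) (Fin K) ℝ) :
    Matrix ((k : Fin K) × Fin (p k)) ((k : Fin K) × Fin (p k)) ℝ :=
  Matrix.of fun x y => B x.1 y.1


open Polynomial

section AuxLemmas

variable {n : Type*} [Fintype n] [DecidableEq n]

lemma aux_charpoly_conj {R : Type*} [CommRing R] (P Q M : Matrix n n R)
    (h1 : P * Q = 1) : (P * M * Q).charpoly = M.charpoly := by
  have h2 : Q * P = 1 := mul_eq_one_comm.mp h1
  have hPQ : (C : R →+* R[X]).mapMatrix P * (C : R →+* R[X]).mapMatrix Q = 1 := by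
    rw [← _root_.map_mul, h1, _root_.map_one]
  have key : charmatrix (P * M * Q)
      = (C : R →+* R[X]).mapMatrix P * charmatrix M * (C : R →+* R[X]).mapMatrix Q := by
    rw [charmatrix, charmatrix, mul_sub, sub_mul]
    congr 1
    · have hc : Commute ((scalar n) (X : R[X])) ((C : R →+* R[X]).mapMatrix P) :=
        scalar_commute _ (Commute.all _) _
      rw [← hc.eq, mul_assoc, hPQ, mul_one]
    · rw [_root_.map_mul, _root_.map_mul]
  have hQP : (C : R →+* R[X]).mapMatrix Q * (C : R →+* R[X]).mapMatrix P = 1 := by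
    rw [← _root_.map_mul, h2, _root_.map_one]
  rw [Matrix.charpoly, Matrix.charpoly, key, det_mul, det_mul, mul_comm, ← mul_assoc,
    ← det_mul, hQP, det_one, one_mul]

lemma aux_charpoly_diagonal {R : Type*} [CommRing R] (d : n → R) :
    (diagonal d).charpoly = ∏ i, (X - C (d i)) := by
  have key : charmatrix (diagonal d) = diagonal fun i => X - C (d i) := by
    ext i j
    rcases eq_or_ne i j with rfl | h
    · simp
    · simp [h]
  rw [Matrix.charpoly, key, det_diagonal]

lemma aux_posDef_mul_mul {A S : Matrix n n ℝ} (hA : A.PosDef) (hS : IsUnit S) :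
    (S * A * Sᴴ).PosDef := by
  refine posDef_iff_dotProduct_mulVec.mpr ⟨isHermitian_mul_mul_conjTranspose _ hA.1, fun x hx => ?_⟩
  have hSH : IsUnit Sᴴ := by
    rwa [conjTranspose_eq_transpose_of_trivial, isUnit_transpose]
  have hx' : Sᴴ *ᵥ x ≠ 0 := by
    intro h
    exact hx <| (Matrix.mulVec_injective_iff_isUnit.mpr hSH) (h.trans (mulVec_zero _).symm)
  have key : star x ⬝ᵥ ((S * A * Sᴴ) *ᵥ x)
      = star (Sᴴ *ᵥ x) ⬝ᵥ (A *ᵥ (Sᴴ *ᵥ x)) := by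
    rw [star_mulVec, conjTranspose_conjTranspose, ← mulVec_mulVec, ← mulVec_mulVec,
      dotProduct_mulVec]
  rw [key]
  exact hA.dotProduct_mulVec_pos hx'

lemma aux_posDef_iff_eig {A : Matrix n n ℝ} (hA : A.IsHermitian) :
    A.PosDef ↔ ∀ i, 0 < hA.eigenvalues i := by
  constructor
  · intro h i
    exact h.eigenvalues_pos i
  · intro h
    rw [hA.spectral_theorem]
    have hU : IsUnit (hA.eigenvectorUnitary : Matrix n n ℝ) :=
      ⟨⟨(hA.eigenvectorUnitary : Matrix n n ℝ), star (hA.eigenvectorUnitary : Matrix n n ℝ),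
        (Matrix.mem_unitaryGroup_iff).mp hA.eigenvectorUnitary.2,
        (Matrix.mem_unitaryGroup_iff').mp hA.eigenvectorUnitary.2⟩, rfl⟩
    have hD : (Matrix.diagonal (RCLike.ofReal ∘ hA.eigenvalues) : Matrix n n ℝ).PosDef :=
      Matrix.PosDef.diagonal fun i => by simpa using h i
    simpa [Matrix.star_eq_conjTranspose] using aux_posDef_mul_mul hD hU

lemma aux_diag_conj_posDef_iff {d : n → ℝ} (hd : ∀ i, d i ≠ 0) (M : Matrix n n ℝ) :
    (diagonal d * M * diagonal d).PosDef ↔ M.PosDef := by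
  have hdig : ∀ (e : n → ℝ), (∀ i, e i ≠ 0) → IsUnit (diagonal e) := by
    intro e he
    rw [Matrix.isUnit_iff_isUnit_det, det_diagonal]
    exact (Finset.prod_ne_zero_iff.mpr fun i _ => he i).isUnit
  have hH : (diagonal d)ᴴ = diagonal d := by
    rw [conjTranspose_eq_transpose_of_trivial, diagonal_transpose]
  constructor
  · intro h
    have key : diagonal (fun i => (d i)⁻¹) * (diagonal d * M * diagonal d) *
        diagonal (fun i => (d i)⁻¹) = M := by
      rw [← mul_assoc, ← mul_assoc, diagonal_mul_diagonal, mul_assoc, mul_assoc,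
        diagonal_mul_diagonal]
      have h1 : (fun i => (d i)⁻¹ * d i) = fun _ => (1 : ℝ) := by
        funext i; exact inv_mul_cancel₀ (hd i)
      have h2 : (fun i => d i * (d i)⁻¹) = fun _ => (1 : ℝ) := by
        funext i; exact mul_inv_cancel₀ (hd i)
      rw [h1, h2, diagonal_one, one_mul, mul_one]
    have := aux_posDef_mul_mul h (hdig _ fun i => inv_ne_zero (hd i))
    rwa [show (diagonal fun i => (d i)⁻¹)ᴴ = diagonal fun i => (d i)⁻¹ by
      rw [conjTranspose_eq_transpose_of_trivial, diagonal_transpose], key] at this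
  · intro h
    have := aux_posDef_mul_mul h (hdig _ hd)
    rwa [hH] at this

end AuxLemmas

lemma aux_quadform {K : ℕ} (p : Fin K → ℕ) (a : Fin K → ℝ) (B : Matrix (Fin K) (Fin K) ℝ)
    (x : (k : Fin K) × Fin (p k) → ℝ) :
    x ⬝ᵥ ((blockI p a + blockJ p B) *ᵥ x)
      = (∑ k, a k * ∑ m, x ⟨k, m⟩ ^ 2)
        + (fun k => ∑ m, x ⟨k, m⟩) ⬝ᵥ (B *ᵥ fun k => ∑ m, x ⟨k, m⟩) := by
  rw [add_mulVec, dotProduct_add]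
  congr 1
  · rw [blockI]
    simp only [dotProduct, mulVec_diagonal]
    rw [← Finset.univ_sigma_univ, Finset.sum_sigma]
    refine Finset.sum_congr rfl fun k _ => ?_
    rw [Finset.mul_sum]
    exact Finset.sum_congr rfl fun m _ => by ring
  · have hmv : ∀ j : (k : Fin K) × Fin (p k),
        (blockJ p B *ᵥ x) j = ∑ k', B j.1 k' * ∑ m, x ⟨k', m⟩ := by
      intro j
      show ∑ i : (k : Fin K) × Fin (p k), blockJ p B j i * x i = _
      rw [← Finset.univ_sigma_univ, Finset.sum_sigma]
      exact Finset.sum_congr rfl fun k' _ => by rw [Finset.mul_sum]; rfl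
    simp only [dotProduct, hmv]
    rw [← Finset.univ_sigma_univ, Finset.sum_sigma]
    refine Finset.sum_congr rfl fun k _ => ?_
    rw [Finset.sum_mul]
    exact Finset.sum_congr rfl fun m _ => rfl

lemma aux_main {K : ℕ} (p : Fin K → ℕ) (hp : ∀ k, 1 < p k)
    (a : Fin K → ℝ) (B : Matrix (Fin K) (Fin K) ℝ) (hB : B.IsSymm) :
    (blockI p a + blockJ p B).PosDef ↔
      (∀ k, 0 < a k) ∧ (Matrix.diagonal (fun k => a k / (p k : ℝ)) + B).PosDef := by
  have hp0 : ∀ k, 0 < p k := fun k => lt_trans one_pos (hp k)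
  have hBh : B.IsHermitian := by
    rwa [Matrix.IsHermitian, conjTranspose_eq_transpose_of_trivial]
  have hCh : (Matrix.diagonal (fun k => a k / (p k : ℝ)) + B).IsHermitian :=
    (isHermitian_diagonal _).add hBh
  have hNh : (blockI p a + blockJ p B).IsHermitian := by
    refine IsHermitian.add (isHermitian_diagonal _) ?_
    rw [Matrix.IsHermitian, conjTranspose_eq_transpose_of_trivial]
    ext i j
    rw [transpose_apply]
    show B j.1 i.1 = B i.1 j.1
    conv_rhs => rw [← hB]
    rfl
  rw [posDef_iff_dotProduct_mulVec, posDef_iff_dotProduct_mulVec]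
  have hCs : ∀ s : Fin K → ℝ,
      s ⬝ᵥ ((Matrix.diagonal (fun k => a k / (p k : ℝ)) + B) *ᵥ s)
        = (∑ k, a k / (p k : ℝ) * s k ^ 2) + s ⬝ᵥ (B *ᵥ s) := by
    intro s
    rw [add_mulVec, dotProduct_add]
    congr 1
    simp only [dotProduct, mulVec_diagonal]
    exact Finset.sum_congr rfl fun k _ => by ring
  constructor
  · rintro ⟨-, hq⟩
    constructor
    · intro k
      set u : (k : Fin K) × Fin (p k) := ⟨k, ⟨0, hp0 k⟩⟩ with hu
      set v : (k : Fin K) × Fin (p k) := ⟨k, ⟨1, hp k⟩⟩ with hv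
      have huv : u ≠ v := by simp [hu, hv, Fin.ext_iff]
      set x : (k : Fin K) × Fin (p k) → ℝ := Pi.single u 1 - Pi.single v 1 with hx
      have hxne : x ≠ 0 := by
        intro h
        have := congrFun h u
        simp [hx, Pi.single_apply, huv.symm, huv] at this
      have hval : x ⬝ᵥ ((blockI p a + blockJ p B) *ᵥ x) = 2 * a k := by
        have hN : ∀ i j : (k : Fin K) × Fin (p k),
            (blockI p a + blockJ p B) i j
              = (if i = j then a i.1 else 0) + B i.1 j.1 := fun i j => rfl
        rw [hx]
        simp only [Matrix.mulVec_sub, mulVec_single, dotProduct_sub, sub_dotProduct,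
          single_dotProduct, mul_one, one_mul, Pi.sub_apply, Pi.smul_apply, Matrix.col_apply,
          op_smul_eq_mul]
        rw [hN u u, hN u v, hN v u, hN v v]
        simp [huv, huv.symm]
        ring
      have := hq hxne
      rw [show star x = x from rfl, hval] at this
      linarith
    · refine ⟨hCh, fun s hs => ?_⟩
      set x : (k : Fin K) × Fin (p k) → ℝ := fun j => s j.1 / (p j.1 : ℝ) with hxdef
      have hxne : x ≠ 0 := by
        obtain ⟨k, hk⟩ := Function.ne_iff.mp hs
        refine Function.ne_iff.mpr ⟨⟨k, ⟨0, hp0 k⟩⟩, ?_⟩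
        exact div_ne_zero hk (Nat.cast_ne_zero.mpr (hp0 k).ne')
      have hsum : (fun k => ∑ m : Fin (p k), x ⟨k, m⟩) = s := by
        funext k
        rw [hxdef]
        simp only [Finset.sum_const, Finset.card_univ, Fintype.card_fin, nsmul_eq_mul]
        rw [mul_comm]
        exact div_mul_cancel₀ _ (Nat.cast_ne_zero.mpr (hp0 k).ne')
      have := hq hxne
      rw [show star x = x from rfl, aux_quadform, hsum] at this
      rw [show star s = s from rfl, hCs]
      convert this using 2
      refine Finset.sum_congr rfl fun k _ => ?_
      rw [hxdef]
      simp only [Finset.sum_const, Finset.card_univ, Fintype.card_fin, nsmul_eq_mul]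
      have : ((p k : ℝ)) ≠ 0 := Nat.cast_ne_zero.mpr (hp0 k).ne'
      field_simp
  · rintro ⟨ha, hC⟩
    refine ⟨hNh, fun x hx => ?_⟩
    rw [show star x = x from rfl, aux_quadform]
    set s : Fin K → ℝ := fun k => ∑ m : Fin (p k), x ⟨k, m⟩ with hsdef
    have key : ∀ k, s k ^ 2 / (p k : ℝ) ≤ ∑ m : Fin (p k), x ⟨k, m⟩ ^ 2 := by
      intro k
      rw [div_le_iff₀ (by exact_mod_cast hp0 k)]
      calc s k ^ 2 ≤ (Finset.univ.card : ℝ) * ∑ m : Fin (p k), x ⟨k, m⟩ ^ 2 := by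
            simp only [hsdef]
            exact sq_sum_le_card_mul_sum_sq
        _ = (∑ m : Fin (p k), x ⟨k, m⟩ ^ 2) * (p k : ℝ) := by
            rw [Finset.card_univ, Fintype.card_fin, mul_comm]
    by_cases hs : s = 0
    · have hBzero : s ⬝ᵥ (B *ᵥ s) = 0 := by rw [hs]; simp
      rw [hBzero, add_zero]
      obtain ⟨j, hj⟩ := Function.ne_iff.mp hx
      have hjpos : 0 < a j.1 * ∑ m : Fin (p j.1), x ⟨j.1, m⟩ ^ 2 := by
        refine mul_pos (ha j.1) ?_
        have h1 : x j ^ 2 ≤ ∑ m : Fin (p j.1), x ⟨j.1, m⟩ ^ 2 := by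
          have := Finset.single_le_sum (f := fun m : Fin (p j.1) => x ⟨j.1, m⟩ ^ 2)
            (fun m _ => sq_nonneg _) (Finset.mem_univ j.2)
          simpa [Sigma.eta] using this
        have h2 : 0 < x j ^ 2 := lt_of_le_of_ne (sq_nonneg _) (Ne.symm (pow_ne_zero 2 hj))
        linarith
      refine Finset.sum_pos' (fun k _ => ?_) ⟨j.1, Finset.mem_univ _, hjpos⟩
      exact mul_nonneg (ha k).le (Finset.sum_nonneg fun m _ => sq_nonneg _)
    · have h1 : 0 < s ⬝ᵥ ((Matrix.diagonal (fun k => a k / (p k : ℝ)) + B) *ᵥ s) :=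
        hC.2 hs
      rw [hCs] at h1
      have h2 : (∑ k, a k / (p k : ℝ) * s k ^ 2) ≤ ∑ k, a k * ∑ m : Fin (p k), x ⟨k, m⟩ ^ 2 := by
        refine Finset.sum_le_sum fun k _ => ?_
        rw [div_mul_eq_mul_div, mul_div_assoc]
        exact mul_le_mul_of_nonneg_left (key k) (ha k).le
      linarith

/-- A uniform-block matrix is positive definite iff `A` is positive definite
(`a_kk > 0` for all `k`) and `Δ = A + B P` has positive (real) eigenvalues only. -/
theorem ub_posDef_iff {K : ℕ} (p : Fin K → ℕ) (hp : ∀ k, 1 < p k)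
    (a : Fin K → ℝ) (B : Matrix (Fin K) (Fin K) ℝ) (hB : B.IsSymm) :
    (blockI p a + blockJ p B).PosDef ↔
      ((∀ k, 0 < a k) ∧
        ∀ μ : ℂ,
          (((Matrix.diagonal a + B * Matrix.diagonal (fun k => (p k : ℝ))).map
              (Complex.ofReal)).charpoly).IsRoot μ → μ.im = 0 ∧ 0 < μ.re) := by
  have hp0 : ∀ k, 0 < p k := fun k => lt_trans one_pos (hp k)
  set r : Fin K → ℝ := fun k => Real.sqrt (p k) with hrdef
  have hr0 : ∀ k, 0 < r k := fun k => Real.sqrt_pos.mpr (by exact_mod_cast hp0 k)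
  have hrne : ∀ k, r k ≠ 0 := fun k => (hr0 k).ne'
  have hrr : ∀ k, r k * r k = (p k : ℝ) := fun k =>
    Real.mul_self_sqrt (by positivity)
  set Dr : Matrix (Fin K) (Fin K) ℝ := diagonal r with hDr
  set Di : Matrix (Fin K) (Fin K) ℝ := diagonal (fun k => (r k)⁻¹) with hDi
  have h_inv1 : Di * Dr = 1 := by
    rw [hDi, hDr, diagonal_mul_diagonal,
      show (fun k => (r k)⁻¹ * r k) = fun _ => (1 : ℝ) from
        funext fun k => inv_mul_cancel₀ (hrne k), diagonal_one]
  have h_inv2 : Dr * Di = 1 := by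
    rw [hDi, hDr, diagonal_mul_diagonal,
      show (fun k => r k * (r k)⁻¹) = fun _ => (1 : ℝ) from
        funext fun k => mul_inv_cancel₀ (hrne k), diagonal_one]
  set M : Matrix (Fin K) (Fin K) ℝ := diagonal a + Dr * B * Dr with hMdef
  have hBh : B.IsHermitian := by
    rwa [Matrix.IsHermitian, conjTranspose_eq_transpose_of_trivial]
  have hDrH : Drᴴ = Dr := by
    rw [hDr, conjTranspose_eq_transpose_of_trivial, diagonal_transpose]
  have hM : M.IsHermitian := by
    refine (isHermitian_diagonal a).add ?_
    have := isHermitian_mul_mul_conjTranspose Dr hBh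
    rwa [hDrH] at this
  have t1 : Di * diagonal a * Dr = diagonal a := by
    rw [hDi, hDr, diagonal_mul_diagonal, diagonal_mul_diagonal]
    refine congrArg Matrix.diagonal (funext fun k => ?_)
    rw [mul_comm ((r k)⁻¹) (a k), mul_assoc, inv_mul_cancel₀ (hrne k), mul_one]
  have t2 : Di * (Dr * B * Dr) * Dr = B * diagonal (fun k => (p k : ℝ)) := by
    have hassoc : Di * (Dr * B * Dr) * Dr = Di * Dr * (B * (Dr * Dr)) := by
      simp only [Matrix.mul_assoc]
    rw [hassoc, h_inv1, one_mul, hDr, diagonal_mul_diagonal]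
    exact congrArg (fun D => B * D) (congrArg Matrix.diagonal (funext fun k => hrr k))
  have hΔ : diagonal a + B * diagonal (fun k => (p k : ℝ)) = Di * M * Dr := by
    rw [hMdef, Matrix.mul_add, Matrix.add_mul, t1, t2]
  have u1 : Di * diagonal a * Di = diagonal (fun k => a k / (p k : ℝ)) := by
    rw [hDi, diagonal_mul_diagonal, diagonal_mul_diagonal]
    refine congrArg Matrix.diagonal (funext fun k => ?_)
    rw [← hrr k]
    have hx : a k / (r k * r k) = a k * ((r k)⁻¹ * (r k)⁻¹) := by
      rw [div_eq_mul_inv, mul_inv]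
    rw [hx]
    ring
  have u2 : Di * (Dr * B * Dr) * Di = B := by
    have hassoc : Di * (Dr * B * Dr) * Di = Di * Dr * (B * (Dr * Di)) := by
      simp only [Matrix.mul_assoc]
    rw [hassoc, h_inv1, h_inv2, one_mul, Matrix.mul_one]
  have hC_eq : diagonal (fun k => a k / (p k : ℝ)) + B = Di * M * Di := by
    rw [hMdef, Matrix.mul_add, Matrix.add_mul, u1, u2]
  have hcpM : M.charpoly = ∏ i, (X - C (hM.eigenvalues i)) := by
    conv_lhs => rw [hM.spectral_theorem, Unitary.conjStarAlgAut_apply]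
    rw [aux_charpoly_conj _ _ _ ((Matrix.mem_unitaryGroup_iff).mp hM.eigenvectorUnitary.2),
      aux_charpoly_diagonal]
    rfl
  have hcpΔ : ((diagonal a + B * diagonal (fun k => (p k : ℝ))).map Complex.ofReal).charpoly
      = ∏ i, (X - C ((hM.eigenvalues i : ℝ) : ℂ)) := by
    rw [hΔ, show (Complex.ofReal : ℝ → ℂ) = ⇑Complex.ofRealHom from rfl,
      Matrix.charpoly_map, aux_charpoly_conj _ _ _ h_inv1, hcpM, Polynomial.map_prod]
    simp [Polynomial.map_sub]
  have hroots : ∀ μ : ℂ,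
      (∏ i, (X - C ((hM.eigenvalues i : ℝ) : ℂ))).IsRoot μ ↔
        ∃ i, μ = ((hM.eigenvalues i : ℝ) : ℂ) := by
    intro μ
    rw [Polynomial.IsRoot, Polynomial.eval_prod, Finset.prod_eq_zero_iff]
    constructor
    · rintro ⟨i, -, h⟩
      exact ⟨i, sub_eq_zero.mp (by simpa using h)⟩
    · rintro ⟨i, rfl⟩
      exact ⟨i, Finset.mem_univ _, by simp⟩
  have hdne : ∀ k, (r k)⁻¹ ≠ 0 := fun k => inv_ne_zero (hrne k)
  rw [aux_main p hp a B hB]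
  constructor
  · rintro ⟨ha, hC⟩
    refine ⟨ha, fun μ hroot => ?_⟩
    rw [hcpΔ] at hroot
    obtain ⟨i, rfl⟩ := (hroots μ).mp hroot
    have hMpd : M.PosDef := by
      rw [hC_eq, hDi] at hC
      exact (aux_diag_conj_posDef_iff hdne M).mp hC
    have := (aux_posDef_iff_eig hM).mp hMpd i
    simp [this]
  · rintro ⟨ha, hcond⟩
    refine ⟨ha, ?_⟩
    have heig : ∀ i, 0 < hM.eigenvalues i := fun i => by
      have := hcond ((hM.eigenvalues i : ℝ) : ℂ)
        (by rw [hcpΔ]; exact (hroots _).mpr ⟨i, rfl⟩)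
      simpa using this.2
    have hMpd : M.PosDef := (aux_posDef_iff_eig hM).mpr heig
    rw [hC_eq, hDi]
    exact (aux_diag_conj_posDef_iff hdne M).mpr hMpd
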